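/- arXiv:1005.1721 — 4 statements merged into one kernel-verified Lean document; each statement's English description precedes it below -/
import Mathlib

section
/- For every finite graph F, the incompatibility graph Inc(κ(F)) of the convex splits of the simplex graph κ(F) is isomorphic to F. -/
open SimpleGraph
open scoped symmDiff

/-- The metric interval between `u` and `v` in a graph `G`. -/
def gInterval {V : Type} (G : SimpleGraph V) (u v : V) : Set V :=
  {z | G.dist u z + G.dist z v = G.dist u v}

/-- A set of vertices is convex if it contains the interval between any two of
its elements. -/
def IsConvexSet {V : Type} (G : SimpleGraph V) (S : Set V) : Prop :=
  ∀ u ∈ S, ∀ v ∈ S, gInterval G u v ⊆ S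

/-- A convex split of `G` is an unordered pair `{A, B}` of nonempty convex sets
partitioning the vertex set. -/
def IsConvexSplit {V : Type} (G : SimpleGraph V) (P : Set (Set V)) : Prop :=
  ∃ A B : Set V, P = {A, B} ∧ A.Nonempty ∧ B.Nonempty ∧
    IsConvexSet G A ∧ IsConvexSet G B ∧ A ∪ B = Set.univ ∧ Disjoint A B

/-- Two splits are incompatible when all four pairwise intersections of their
parts are nonempty. -/
def SplitsIncompatible {V : Type} (P Q : Set (Set V)) : Prop :=
  ∀ A ∈ P, ∀ B ∈ Q, (A ∩ B : Set V).Nonempty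

/-- The incompatibility graph of the convex splits of `G`. -/
def IncGraph {V : Type} (G : SimpleGraph V) :
    SimpleGraph {P : Set (Set V) // IsConvexSplit G P} :=
  SimpleGraph.fromRel (fun P Q => SplitsIncompatible P.1 Q.1)

/-- The simplex graph `κ(F)` of a graph `F`: vertices are the cliques of `F`
(including the empty clique), two cliques being adjacent iff one is obtained
from the other by adding a single vertex. -/
def simplexGraph {α : Type} (F : SimpleGraph α) :
    SimpleGraph {s : Finset α // F.IsClique (s : Set α)} :=
  SimpleGraph.fromRel (fun s t =>
    ∃ a : α, a ∉ s.1 ∧ (t.1 : Set α) = insert a (s.1 : Set α))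

section Aux

variable {α : Type} {F : SimpleGraph α}

/-- abbreviation for the vertex type of the simplex graph -/
private abbrev Clq (F : SimpleGraph α) : Type := {s : Finset α // F.IsClique (s : Set α)}

section SD
variable [DecidableEq α]

private lemma sd_insert {s : Finset α} {a : α} (ha : a ∉ s) : s ∆ insert a s = {a} := by
  ext x
  simp only [Finset.mem_symmDiff, Finset.mem_insert, Finset.mem_singleton]
  constructor
  · rintro (⟨h1, h2⟩ | ⟨rfl | h1, h2⟩)
    · exact absurd (Or.inr h1) h2
    · rfl
    · exact absurd h1 h2
  · rintro rfl
    exact Or.inr ⟨Or.inl rfl, ha⟩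

private lemma sd_erase_left {s t : Finset α} {x : α} (hxs : x ∈ s) (hxt : x ∉ t) :
    s.erase x ∆ t = (s ∆ t).erase x := by
  ext y
  simp only [Finset.mem_symmDiff, Finset.mem_erase]
  by_cases hy : y = x
  · subst hy; tauto
  · tauto

private lemma sd_insert_left {s t : Finset α} {x : α} (hxs : x ∉ s) (hxt : x ∈ t) :
    insert x s ∆ t = (s ∆ t).erase x := by
  ext y
  simp only [Finset.mem_symmDiff, Finset.mem_erase, Finset.mem_insert]
  by_cases hy : y = x
  · subst hy; tauto
  · tauto

private lemma sd_singleton_mem {s : Finset α} {a : α} (ha : a ∈ s) :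
    s ∆ {a} = s.erase a := by
  ext x
  simp only [Finset.mem_symmDiff, Finset.mem_singleton, Finset.mem_erase]
  by_cases hx : x = a
  · subst hx; tauto
  · tauto

private lemma sd_singleton_notMem {s : Finset α} {a : α} (ha : a ∉ s) :
    s ∆ {a} = insert a s := by
  ext x
  simp only [Finset.mem_symmDiff, Finset.mem_singleton, Finset.mem_insert]
  by_cases hx : x = a
  · subst hx; tauto
  · tauto

private lemma sd_empty_left (s : Finset α) : (∅ : Finset α) ∆ s = s := by
  simp [symmDiff_def]

private lemma sd_pair {a b : α} (hab : a ≠ b) : ({a} : Finset α) ∆ {b} = {a, b} := by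
  ext x
  simp only [Finset.mem_symmDiff, Finset.mem_singleton, Finset.mem_insert]
  by_cases h1 : x = a
  · subst h1; tauto
  · tauto

end SD

private lemma simplex_adj_iff [DecidableEq α] {S T : Clq F} :
    (simplexGraph F).Adj S T ↔ S ≠ T ∧
      ((∃ a ∉ S.1, T.1 = insert a S.1) ∨ (∃ a ∉ T.1, S.1 = insert a T.1)) := by
  rw [simplexGraph, fromRel_adj]
  have key : ∀ U V : Clq F,
      (∃ a ∉ U.1, (V.1 : Set α) = insert a (U.1 : Set α)) ↔
      (∃ a ∉ U.1, V.1 = insert a U.1) := by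
    intro U V
    constructor
    · rintro ⟨a, ha, h⟩
      exact ⟨a, ha, Finset.coe_injective (by rw [h, Finset.coe_insert])⟩
    · rintro ⟨a, ha, h⟩
      exact ⟨a, ha, by rw [h, Finset.coe_insert]⟩
  rw [key S T, key T S]

section Dist
variable [DecidableEq α]

private lemma adj_sd_card {S T : Clq F} (h : (simplexGraph F).Adj S T) :
    (S.1 ∆ T.1).card = 1 := by
  rcases (simplex_adj_iff.mp h).2 with ⟨a, ha, hT⟩ | ⟨a, ha, hS⟩
  · rw [hT, sd_insert ha, Finset.card_singleton]
  · rw [hS, symmDiff_comm, sd_insert ha, Finset.card_singleton]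

private lemma sd_card_le_length {S T : Clq F} (p : (simplexGraph F).Walk S T) :
    (S.1 ∆ T.1).card ≤ p.length := by
  induction p with
  | nil => simp
  | @cons u v w h q ih =>
    have htri : (u.1 ∆ w.1) ⊆ (u.1 ∆ v.1) ∪ (v.1 ∆ w.1) := by
      simpa [Finset.sup_eq_union] using symmDiff_triangle u.1 v.1 w.1
    calc (u.1 ∆ w.1).card ≤ ((u.1 ∆ v.1) ∪ (v.1 ∆ w.1)).card := Finset.card_le_card htri
      _ ≤ (u.1 ∆ v.1).card + (v.1 ∆ w.1).card := Finset.card_union_le _ _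
      _ ≤ 1 + q.length := by
          have := adj_sd_card h
          omega
      _ = (SimpleGraph.Walk.cons h q).length := by simp [Nat.add_comm]

private lemma exists_walk_sd : ∀ (n : ℕ) (S T : Clq F), (S.1 ∆ T.1).card = n →
    ∃ p : (simplexGraph F).Walk S T, p.length = n := by
  intro n
  induction n with
  | zero =>
    intro S T h
    have hST : S = T := Subtype.ext (Finset.symmDiff_eq_empty.mp (Finset.card_eq_zero.mp h))
    subst hST
    exact ⟨SimpleGraph.Walk.nil, rfl⟩
  | succ n ih =>
    intro S T h
    by_cases hst : (S.1 \ T.1).Nonempty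
    · obtain ⟨x, hx⟩ := hst
      rw [Finset.mem_sdiff] at hx
      refine ?_
      set U : Clq F := ⟨S.1.erase x, S.2.subset (by
        rw [Finset.coe_subset]; exact Finset.erase_subset _ _)⟩ with hU
      have hxU : x ∉ U.1 := Finset.notMem_erase _ _
      have hSU : S.1 = insert x U.1 := (Finset.insert_erase hx.1).symm
      have hne : S ≠ U := by
        intro hcon
        rw [hcon] at hx
        exact hxU hx.1
      have hadj : (simplexGraph F).Adj S U := by
        rw [simplex_adj_iff]
        exact ⟨hne, Or.inr ⟨x, hxU, hSU⟩⟩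
      have hcard : (U.1 ∆ T.1).card = n := by
        have : U.1 ∆ T.1 = (S.1 ∆ T.1).erase x := sd_erase_left hx.1 hx.2
        rw [this, Finset.card_erase_of_mem (by
          simp [Finset.mem_symmDiff]; tauto)]
        omega
      obtain ⟨p, hp⟩ := ih U T hcard
      exact ⟨SimpleGraph.Walk.cons hadj p, by simp [hp]⟩
    · rw [Finset.not_nonempty_iff_eq_empty, Finset.sdiff_eq_empty_iff_subset] at hst
      have hts : (T.1 \ S.1).Nonempty := by
        rw [← Finset.card_pos]
        have : S.1 ∆ T.1 = T.1 \ S.1 := by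
          rw [symmDiff_def, Finset.sdiff_eq_empty_iff_subset.mpr hst]
          simp
        rw [← this, h]
        omega
      obtain ⟨x, hx⟩ := hts
      rw [Finset.mem_sdiff] at hx
      set U : Clq F := ⟨insert x S.1, T.2.subset (by
        rw [Finset.coe_subset]; exact Finset.insert_subset hx.1 hst)⟩ with hUdef
      have hUv : U.1 = insert x S.1 := rfl
      have hne : S ≠ U := by
        intro hcon
        have : x ∈ S.1 := by rw [hcon, hUv]; exact Finset.mem_insert_self _ _
        exact hx.2 this
      have hadj : (simplexGraph F).Adj S U := by
        rw [simplex_adj_iff]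
        exact ⟨hne, Or.inl ⟨x, hx.2, rfl⟩⟩
      have hcard : (U.1 ∆ T.1).card = n := by
        have : U.1 ∆ T.1 = (S.1 ∆ T.1).erase x := sd_insert_left hx.2 hx.1
        rw [this, Finset.card_erase_of_mem (by
          simp [Finset.mem_symmDiff]; tauto)]
        omega
      obtain ⟨p, hp⟩ := ih U T hcard
      exact ⟨SimpleGraph.Walk.cons hadj p, by simp [hp]⟩

private lemma simplex_dist_eq (S T : Clq F) :
    (simplexGraph F).dist S T = (S.1 ∆ T.1).card := by
  obtain ⟨p, hp⟩ := exists_walk_sd (S.1 ∆ T.1).card S T rfl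
  refine le_antisymm (hp ▸ SimpleGraph.dist_le p) ?_
  obtain ⟨q, hq⟩ := (SimpleGraph.Reachable.exists_walk_length_eq_dist ⟨p⟩ : _)
  rw [← hq]
  exact sd_card_le_length q

private lemma mem_gInterval_iff {S T Z : Clq F} :
    Z ∈ gInterval (simplexGraph F) S T ↔
      (S.1 ∆ Z.1).card + (Z.1 ∆ T.1).card = (S.1 ∆ T.1).card := by
  simp only [gInterval, Set.mem_setOf_eq, simplex_dist_eq]

end Dist

section Between
variable [DecidableEq α]

private lemma between_inter_empty {S T Z : Finset α}
    (h : (S ∆ Z).card + (Z ∆ T).card = (S ∆ T).card) :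
    (S ∆ Z) ∩ (Z ∆ T) = ∅ := by
  have hsub : S ∆ T ⊆ (S ∆ Z) ∪ (Z ∆ T) := by
    simpa [Finset.sup_eq_union] using symmDiff_triangle S Z T
  have h1 := Finset.card_union_add_card_inter (S ∆ Z) (Z ∆ T)
  have h2 : (S ∆ T).card ≤ ((S ∆ Z) ∪ (Z ∆ T)).card := Finset.card_le_card hsub
  have h3 : ((S ∆ Z) ∪ (Z ∆ T)).card ≤ (S ∆ Z).card + (Z ∆ T).card :=
    Finset.card_union_le _ _
  exact Finset.card_eq_zero.mp (by omega)

private lemma between_mem_iff {S T Z : Finset α}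
    (h : (S ∆ Z).card + (Z ∆ T).card = (S ∆ T).card) {a : α} (ha : a ∈ S ↔ a ∈ T) :
    (a ∈ Z ↔ a ∈ S) := by
  have hd := between_inter_empty h
  constructor
  · intro hz
    by_contra hs
    have : a ∈ (S ∆ Z) ∩ (Z ∆ T) := by
      simp only [Finset.mem_inter, Finset.mem_symmDiff]
      tauto
    rw [hd] at this
    exact absurd this (Finset.notMem_empty a)
  · intro hs
    by_contra hz
    have : a ∈ (S ∆ Z) ∩ (Z ∆ T) := by
      simp only [Finset.mem_inter, Finset.mem_symmDiff]
      tauto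
    rw [hd] at this
    exact absurd this (Finset.notMem_empty a)

end Between

/-- the empty clique -/
private def emptyClq (F : SimpleGraph α) : Clq F := ⟨∅, by simp⟩

/-- singleton cliques -/
private def sgl (F : SimpleGraph α) (a : α) : Clq F := ⟨{a}, by simp⟩

/-- the set of cliques containing a given vertex -/
private def Ca (F : SimpleGraph α) (a : α) : Set (Clq F) := {S | a ∈ S.1}

private lemma convex_Ca [DecidableEq α] (a : α) :
    IsConvexSet (simplexGraph F) (Ca F a) := by
  intro S hS T hT Z hZ
  have h := mem_gInterval_iff.mp hZ
  exact (between_mem_iff h (iff_of_true hS hT)).mpr hS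

private lemma convex_Ca_compl [DecidableEq α] (a : α) :
    IsConvexSet (simplexGraph F) (Ca F a)ᶜ := by
  intro S hS T hT Z hZ
  have h := mem_gInterval_iff.mp hZ
  intro hz
  exact hS ((between_mem_iff h (iff_of_false hS hT)).mp hz)

private lemma split_Ca [DecidableEq α] (a : α) :
    IsConvexSplit (simplexGraph F) {Ca F a, (Ca F a)ᶜ} :=
  ⟨Ca F a, (Ca F a)ᶜ, rfl, ⟨sgl F a, Finset.mem_singleton_self a⟩,
    ⟨emptyClq F, Finset.notMem_empty a⟩, convex_Ca a, convex_Ca_compl a,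
    Set.union_compl_self _, disjoint_compl_right⟩

private lemma all_sgl_B [DecidableEq α] {B : Set (Clq F)}
    (hcB : IsConvexSet (simplexGraph F) B) (hE : emptyClq F ∈ B) :
    ∀ (n : ℕ) (S : Clq F), S.1.card = n → (∀ x ∈ S.1, sgl F x ∈ B) → S ∈ B := by
  intro n
  induction n with
  | zero =>
    intro S hcard _
    have : S = emptyClq F := Subtype.ext (Finset.card_eq_zero.mp hcard)
    rw [this]; exact hE
  | succ n ih =>
    intro S hcard hsgl
    obtain ⟨x, hx⟩ := Finset.card_pos.mp (by omega : 0 < S.1.card)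
    set U : Clq F := ⟨S.1.erase x, S.2.subset (by
      rw [Finset.coe_subset]; exact Finset.erase_subset _ _)⟩ with hUdef
    have hxU : x ∉ U.1 := Finset.notMem_erase _ _
    have hUB : U ∈ B := ih U (by
      show (S.1.erase x).card = n
      rw [Finset.card_erase_of_mem hx]; omega)
      (fun y hy => hsgl y (Finset.mem_of_mem_erase hy))
    have hmid : S ∈ gInterval (simplexGraph F) U (sgl F x) := by
      rw [mem_gInterval_iff]
      have e1 : U.1 ∆ S.1 = {x} := by
        have : S.1 = insert x U.1 := (Finset.insert_erase hx).symm
        rw [this, sd_insert hxU]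
      have e2 : S.1 ∆ (sgl F x).1 = U.1 := sd_singleton_mem hx
      have e3 : U.1 ∆ (sgl F x).1 = insert x U.1 := sd_singleton_notMem hxU
      rw [e1, e2, e3, Finset.card_singleton, Finset.card_insert_of_notMem hxU]
      omega
    exact hcB U hUB (sgl F x) (hsgl x hx) hmid

private lemma key [DecidableEq α] {A B : Set (Clq F)}
    (hA : A.Nonempty) (hcA : IsConvexSet (simplexGraph F) A)
    (hcB : IsConvexSet (simplexGraph F) B)
    (hU : A ∪ B = Set.univ) (hD : Disjoint A B) (hE : emptyClq F ∈ B) :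
    ∃ a : α, A = Ca F a ∧ B = (Ca F a)ᶜ := by
  have hmem : ∀ S : Clq F, S ∉ A → S ∈ B := by
    intro S hS
    have : S ∈ A ∪ B := hU ▸ Set.mem_univ S
    rcases this with h | h
    · exact absurd h hS
    · exact h
  have hnotboth : ∀ S : Clq F, S ∈ A → S ∈ B → False :=
    fun S h1 h2 => Set.disjoint_left.mp hD h1 h2
  have hex : ∀ S : Clq F, S ∈ A → ∃ x ∈ S.1, sgl F x ∈ A := by
    intro S hS
    by_contra hcon
    push_neg at hcon
    have : S ∈ B := all_sgl_B hcB hE S.1.card S rfl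
      (fun x hx => hmem _ (hcon x hx))
    exact hnotboth S hS this
  have huniq : ∀ x y : α, sgl F x ∈ A → sgl F y ∈ A → x = y := by
    intro x y hx hy
    by_contra hxy
    have hmid : emptyClq F ∈ gInterval (simplexGraph F) (sgl F x) (sgl F y) := by
      rw [mem_gInterval_iff]
      show (({x} : Finset α) ∆ ∅).card + ((∅ : Finset α) ∆ {y}).card
        = (({x} : Finset α) ∆ {y}).card
      rw [symmDiff_comm ({x} : Finset α) ∅, sd_empty_left, sd_empty_left, sd_pair hxy]
      rw [Finset.card_singleton, Finset.card_singleton,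
        Finset.card_pair hxy]
    exact hnotboth _ (hcA _ hx _ hy hmid) hE
  obtain ⟨S0, hS0⟩ := hA
  obtain ⟨a, _, haA⟩ := hex S0 hS0
  have hACa : A = Ca F a := by
    ext S
    constructor
    · intro hS
      obtain ⟨x, hxS, hxA⟩ := hex S hS
      have : x = a := huniq x a hxA haA
      rw [← this]
      exact hxS
    · intro hS
      have haS : a ∈ S.1 := hS
      by_contra hSA
      have hSB : S ∈ B := hmem S hSA
      have hmid : sgl F a ∈ gInterval (simplexGraph F) (emptyClq F) S := by
        rw [mem_gInterval_iff]
        show ((∅ : Finset α) ∆ {a}).card + (({a} : Finset α) ∆ S.1).card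
          = ((∅ : Finset α) ∆ S.1).card
        rw [sd_empty_left, sd_empty_left, symmDiff_comm ({a} : Finset α) S.1,
          sd_singleton_mem haS, Finset.card_singleton, Finset.card_erase_of_mem haS]
        have : 0 < S.1.card := Finset.card_pos.mpr ⟨a, haS⟩
        omega
      exact hnotboth _ haA (hcB _ hE _ hSB hmid)
  refine ⟨a, hACa, ?_⟩
  ext S
  constructor
  · intro hS hS2
    exact hnotboth S (hACa ▸ hS2) hS
  · intro hS
    exact hmem S (fun h => hS (hACa ▸ h))

/-- the canonical map from vertices to convex splits -/
private def phi [DecidableEq α] (F : SimpleGraph α) (a : α) :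
    {P : Set (Set (Clq F)) // IsConvexSplit (simplexGraph F) P} :=
  ⟨{Ca F a, (Ca F a)ᶜ}, split_Ca a⟩

private lemma phi_inj [DecidableEq α] {a b : α} (h : phi F a = phi F b) : a = b := by
  have h1 : Ca F a ∈ ({Ca F b, (Ca F b)ᶜ} : Set (Set (Clq F))) := by
    have := congrArg Subtype.val h
    rw [phi, phi] at this
    simp only at this
    rw [← this]
    exact Set.mem_insert _ _
  rcases h1 with h1 | h1
  · have : sgl F a ∈ Ca F b := h1 ▸ (Finset.mem_singleton_self a : sgl F a ∈ Ca F a)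
    exact (Finset.mem_singleton.mp this).symm ▸ rfl
  · have h2 : emptyClq F ∈ (Ca F b)ᶜ := fun hc => Finset.notMem_empty b hc
    rw [Set.mem_singleton_iff] at h1
    have : emptyClq F ∈ Ca F a := h1 ▸ h2
    exact absurd this (Finset.notMem_empty a)

private lemma phi_surj [DecidableEq α] (F : SimpleGraph α)
    (P : {P : Set (Set (Clq F)) // IsConvexSplit (simplexGraph F) P}) :
    ∃ a : α, phi F a = P := by
  obtain ⟨P, hP⟩ := P
  obtain ⟨A, B, hPeq, hAne, hBne, hcA, hcB, hU, hD⟩ := hP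
  have hemem : emptyClq F ∈ A ∪ B := hU ▸ Set.mem_univ _
  rcases hemem with hE | hE
  · obtain ⟨a, hBCa, hACa⟩ := key hBne hcB hcA (by rw [Set.union_comm]; exact hU) hD.symm hE
    refine ⟨a, Subtype.ext ?_⟩
    show ({Ca F a, (Ca F a)ᶜ} : Set (Set (Clq F))) = P
    rw [hPeq, hACa, hBCa, Set.pair_comm]
  · obtain ⟨a, hACa, hBCa⟩ := key hAne hcA hcB hU hD hE
    refine ⟨a, Subtype.ext ?_⟩
    show ({Ca F a, (Ca F a)ᶜ} : Set (Set (Clq F))) = P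
    rw [hPeq, hACa, hBCa]

private lemma adj_phi_iff [DecidableEq α] {a b : α} :
    (IncGraph (simplexGraph F)).Adj (phi F a) (phi F b) ↔ F.Adj a b := by
  rw [IncGraph, fromRel_adj]
  constructor
  · rintro ⟨hne, h | h⟩
    · have hab : a ≠ b := fun hcon => hne (by rw [hcon])
      obtain ⟨S, haS, hbS⟩ := h (Ca F a) (Set.mem_insert _ _) (Ca F b) (Set.mem_insert _ _)
      exact S.2 (haS : a ∈ S.1) (hbS : b ∈ S.1) hab
    · have hab : a ≠ b := fun hcon => hne (by rw [hcon])
      obtain ⟨S, hbS, haS⟩ := h (Ca F b) (Set.mem_insert _ _) (Ca F a) (Set.mem_insert _ _)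
      exact S.2 (haS : a ∈ S.1) (hbS : b ∈ S.1) hab
  · intro hab
    have hane : a ≠ b := F.ne_of_adj hab
    refine ⟨fun h => hane (phi_inj h), Or.inl ?_⟩
    have hpair : F.IsClique (({a, b} : Finset α) : Set α) := by
      rw [Finset.coe_insert, Finset.coe_singleton]
      rw [isClique_insert]
      refine ⟨isClique_singleton b, fun c hc _ => ?_⟩
      rw [Set.mem_singleton_iff] at hc
      rw [hc]
      exact hab
    intro X hX Y hY
    rcases hX with hX | hX <;> rcases hY with hY | hY
    · subst hX; subst hY
      exact ⟨⟨{a, b}, hpair⟩, Finset.mem_insert_self a {b},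
        Finset.mem_insert_of_mem (Finset.mem_singleton_self b)⟩
    · rw [Set.mem_singleton_iff] at hY
      subst hX; subst hY
      exact ⟨sgl F a, Finset.mem_singleton_self a,
        fun hc => hane ((Finset.mem_singleton.mp hc).symm)⟩
    · rw [Set.mem_singleton_iff] at hX
      subst hX; subst hY
      exact ⟨sgl F b, fun hc => hane (Finset.mem_singleton.mp hc),
        Finset.mem_singleton_self b⟩
    · rw [Set.mem_singleton_iff] at *
      subst hX; subst hY
      exact ⟨emptyClq F, fun hc => Finset.notMem_empty a hc,
        fun hc => Finset.notMem_empty b hc⟩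

end Aux

/-- For every finite graph `F`, the incompatibility graph of the convex splits
of the simplex graph `κ(F)` is isomorphic to `F`. -/
theorem incGraph_simplexGraph_iso {α : Type} [Fintype α] (F : SimpleGraph α) :
    Nonempty (IncGraph (simplexGraph F) ≃g F) := by
  classical
  have hbij : Function.Bijective (phi F) := ⟨fun a b h => phi_inj h, phi_surj F⟩
  let e := Equiv.ofBijective (phi F) hbij
  have hiso : F ≃g IncGraph (simplexGraph F) := by
    refine ⟨e, ?_⟩
    intro a b
    show (IncGraph (simplexGraph F)).Adj (phi F a) (phi F b) ↔ F.Adj a b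
    exact adj_phi_iff
  exact ⟨hiso.symm⟩
end

section
/- For every k ≥ 2, the odd cogwheel κ(C_{2k+1}) admits no isometric embedding into the Cartesian product of any two trees. -/
open SimpleGraph

/-- `f` is an isometric embedding of the graph `H` into the graph `G`. -/
def IsIsometricEmbedding {A B : Type} (H : SimpleGraph A) (G : SimpleGraph B)
    (f : A → B) : Prop :=
  ∀ x y : A, G.dist (f x) (f y) = H.dist x y

/-- `G` admits an isometric embedding into the Cartesian product of two trees. -/
def EmbedsInTwoTrees {V : Type} (G : SimpleGraph V) : Prop :=
  ∃ (A B : Type) (T₁ : SimpleGraph A) (T₂ : SimpleGraph B),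
    T₁.IsTree ∧ T₂.IsTree ∧ ∃ f : V → A × B, IsIsometricEmbedding G (T₁ □ T₂) f

/-- The cogwheel `κ(C n)`: a cycle of length `2 * n` (on the vertices `some i`)
together with a hub vertex (`none`) adjacent to the `n` alternate vertices
`some i` with `i` even. -/
def cogwheel (n : ℕ) : SimpleGraph (Option (Fin (2 * n))) :=
  SimpleGraph.fromRel (fun a b =>
    match a, b with
    | some i, some j => (j : ℕ) = ((i : ℕ) + 1) % (2 * n)
    | some i, none => (i : ℕ) % 2 = 0
    | _, _ => False)

private lemma myBoxProd_dist_le {α β : Type} {G : SimpleGraph α} {H : SimpleGraph β}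
    (hG : G.Connected) (hH : H.Connected) {x y : α × β} (w : (G □ H).Walk x y) :
    G.dist x.1 y.1 + H.dist x.2 y.2 ≤ w.length := by
  induction w with
  | nil => simp [SimpleGraph.dist_self]
  | @cons a b c hab w ih =>
    rcases SimpleGraph.boxProd_adj.mp hab with ⟨h1, h2⟩ | ⟨h1, h2⟩
    · have e1 : G.dist a.1 b.1 ≤ 1 := by simpa using SimpleGraph.dist_le h1.toWalk
      have tri : G.dist a.1 c.1 ≤ G.dist a.1 b.1 + G.dist b.1 c.1 := hG.dist_triangle
      have t1 : G.dist a.1 c.1 ≤ 1 + G.dist b.1 c.1 := by omega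
      have t2 : H.dist a.2 c.2 = H.dist b.2 c.2 := by rw [h2]
      simp only [SimpleGraph.Walk.length_cons]
      omega
    · have e1 : H.dist a.2 b.2 ≤ 1 := by simpa using SimpleGraph.dist_le h1.toWalk
      have tri : H.dist a.2 c.2 ≤ H.dist a.2 b.2 + H.dist b.2 c.2 := hH.dist_triangle
      have t1 : H.dist a.2 c.2 ≤ 1 + H.dist b.2 c.2 := by omega
      have t2 : G.dist a.1 c.1 = G.dist b.1 c.1 := by rw [h2]
      simp only [SimpleGraph.Walk.length_cons]
      omega

private lemma myBoxProd_dist {α β : Type} {G : SimpleGraph α} {H : SimpleGraph β}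
    (hG : G.Connected) (hH : H.Connected) (x y : α × β) :
    (G □ H).dist x y = G.dist x.1 y.1 + H.dist x.2 y.2 := by
  apply le_antisymm
  · obtain ⟨p, hp⟩ := hG.exists_walk_length_eq_dist x.1 y.1
    obtain ⟨q, hq⟩ := hH.exists_walk_length_eq_dist x.2 y.2
    have := SimpleGraph.dist_le ((p.boxProdLeft H x.2).append (q.boxProdRight G y.1))
    have hl : (p.boxProdLeft H x.2).length = p.length := SimpleGraph.Walk.length_map _ _
    have hr : (q.boxProdRight G y.1).length = q.length := SimpleGraph.Walk.length_map _ _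
    rw [SimpleGraph.Walk.length_append, hl, hr] at this
    simpa [SimpleGraph.Walk.length_append, SimpleGraph.Walk.boxProdLeft,
      SimpleGraph.Walk.boxProdRight, hp, hq] using this
  · obtain ⟨w, hw⟩ := ((hG.boxProd hH).exists_walk_length_eq_dist x y)
    rw [← hw]
    exact myBoxProd_dist_le hG hH w


/-- Core lemma: in a decomposition of a metric as sum of a tree metric and a connected-graph
metric, a square `h,u,w,v` (with diagonals of length 2) cannot have both edges `hu`, `hv`
collapsing in the second factor. -/
private lemma core_square {A B V : Type} {T₁ : SimpleGraph A} {T₂ : SimpleGraph B}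
    (h₁ : T₁.IsTree) (h₂ : T₂.Connected) (g₁ : V → A) (g₂ : V → B) (d : V → V → ℕ)
    (hd : ∀ x y, d x y = T₁.dist (g₁ x) (g₁ y) + T₂.dist (g₂ x) (g₂ y))
    (h u w v : V) (dhu : d h u = 1) (dhv : d h v = 1) (duw : d u w = 1)
    (dwv : d w v = 1) (dhw : d h w = 2) (duv : d u v = 2)
    (e2u : T₂.dist (g₂ h) (g₂ u) = 0) (e2v : T₂.dist (g₂ h) (g₂ v) = 0) : False := by
  have hT₁c : T₁.Connected := h₁.isConnected
  have hgu : g₂ u = g₂ h := (h₂.dist_eq_zero_iff.mp (by rw [SimpleGraph.dist_comm]; exact e2u))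
  have hgv : g₂ v = g₂ h := (h₂.dist_eq_zero_iff.mp (by rw [SimpleGraph.dist_comm]; exact e2v))
  -- first-factor distances of the spokes
  have dhu' := hd h u; have dhv' := hd h v; have duw' := hd u w
  have dwv' := hd w v; have dhw' := hd h w; have duv' := hd u v
  rw [e2u] at dhu'; rw [e2v] at dhv'
  have f1hu : T₁.dist (g₁ h) (g₁ u) = 1 := by omega
  have f1hv : T₁.dist (g₁ h) (g₁ v) = 1 := by omega
  have f2uv : T₂.dist (g₂ u) (g₂ v) = 0 := by rw [hgu, hgv, SimpleGraph.dist_self]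
  have f1uv : T₁.dist (g₁ u) (g₁ v) = 2 := by omega
  have tri : T₁.dist (g₁ u) (g₁ v) ≤ T₁.dist (g₁ u) (g₁ w) + T₁.dist (g₁ w) (g₁ v) :=
    hT₁c.dist_triangle
  have f1uw : T₁.dist (g₁ u) (g₁ w) = 1 := by omega
  have f1wv : T₁.dist (g₁ w) (g₁ v) = 1 := by omega
  have f2uw : T₂.dist (g₂ u) (g₂ w) = 0 := by omega
  have hgw : g₂ w = g₂ u := (h₂.dist_eq_zero_iff.mp (by rw [SimpleGraph.dist_comm]; exact f2uw))
  have f2hw : T₂.dist (g₂ h) (g₂ w) = 0 := by rw [hgw, hgu, SimpleGraph.dist_self]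
  have f1hw : T₁.dist (g₁ h) (g₁ w) = 2 := by omega
  -- now build two distinct paths from g₁ h to g₁ w in the tree T₁
  have ahu : T₁.Adj (g₁ h) (g₁ u) := SimpleGraph.dist_eq_one_iff_adj.mp f1hu
  have ahv : T₁.Adj (g₁ h) (g₁ v) := SimpleGraph.dist_eq_one_iff_adj.mp f1hv
  have auw : T₁.Adj (g₁ u) (g₁ w) := SimpleGraph.dist_eq_one_iff_adj.mp f1uw
  have avw : T₁.Adj (g₁ v) (g₁ w) := SimpleGraph.dist_eq_one_iff_adj.mp
    (by rw [SimpleGraph.dist_comm]; exact f1wv)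
  have hneq_uv : g₁ u ≠ g₁ v := by
    intro hh; rw [hh, SimpleGraph.dist_self] at f1uv; omega
  have hneq_hw : g₁ h ≠ g₁ w := by
    intro hh; rw [hh, SimpleGraph.dist_self] at f1hw; omega
  let P : T₁.Walk (g₁ h) (g₁ w) := SimpleGraph.Walk.cons ahu (SimpleGraph.Walk.cons auw .nil)
  let Q : T₁.Walk (g₁ h) (g₁ w) := SimpleGraph.Walk.cons ahv (SimpleGraph.Walk.cons avw .nil)
  have hP : P.IsPath := by
    simp [P, SimpleGraph.Walk.isPath_def, ahu.ne, auw.ne, hneq_hw]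
  have hQ : Q.IsPath := by
    simp [Q, SimpleGraph.Walk.isPath_def, ahv.ne, avw.ne, hneq_hw]
  have := SimpleGraph.isAcyclic_iff_path_unique.mp h₁.IsAcyclic ⟨P, hP⟩ ⟨Q, hQ⟩
  have hsupp : P.support = Q.support := by
    rw [Subtype.mk.injEq] at this; rw [this]
  simp only [P, Q, SimpleGraph.Walk.support_cons, SimpleGraph.Walk.support_nil] at hsupp
  exact hneq_uv (by simpa using hsupp)

private lemma cog_adj_iff {n : ℕ} (a b : Option (Fin (2*n))) :
    (cogwheel n).Adj a b ↔ a ≠ b ∧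
      ((match a, b with
        | some i, some j => (j : ℕ) = ((i : ℕ) + 1) % (2 * n)
        | some i, none => (i : ℕ) % 2 = 0
        | _, _ => False) ∨
       (match b, a with
        | some i, some j => (j : ℕ) = ((i : ℕ) + 1) % (2 * n)
        | some i, none => (i : ℕ) % 2 = 0
        | _, _ => False)) := by
  rw [cogwheel, SimpleGraph.fromRel_adj]


private lemma cog_adj_hub {n : ℕ} (m : Fin (2*n)) (hm : (m:ℕ) % 2 = 0) :
    (cogwheel n).Adj none (some m) := by
  rw [cog_adj_iff]; exact ⟨by simp, Or.inr hm⟩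

private lemma cog_adj_cycle {n : ℕ} (a b : Fin (2*n)) (hab : (b:ℕ) = ((a:ℕ)+1) % (2*n)) :
    (cogwheel n).Adj (some a) (some b) := by
  rw [cog_adj_iff]
  refine ⟨?_, Or.inl hab⟩
  intro hh
  injection hh with hh
  have hb := b.isLt
  have ha := a.isLt
  rw [← hh] at hab
  rcases Nat.lt_or_ge ((a:ℕ)+1) (2*n) with h | h
  · rw [Nat.mod_eq_of_lt h] at hab; omega
  · have : (a:ℕ) + 1 = 2*n := by omega
    rw [this, Nat.mod_self] at hab; omega

/-- The six distances in a square of the cogwheel. -/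
private lemma cog_square {n : ℕ} (hn : 2 ≤ n) (m : ℕ) (hm2 : m % 2 = 0) (hmN : m + 2 ≤ 2*n)
    (u w v : Fin (2*n)) (hu : (u:ℕ) = m) (hw : (w:ℕ) = (m+1) % (2*n))
    (hv : (v:ℕ) = (m+2) % (2*n)) :
    (cogwheel n).dist none (some u) = 1 ∧ (cogwheel n).dist none (some v) = 1 ∧
    (cogwheel n).dist (some u) (some w) = 1 ∧ (cogwheel n).dist (some w) (some v) = 1 ∧
    (cogwheel n).dist none (some w) = 2 ∧ (cogwheel n).dist (some u) (some v) = 2 := by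
  have hN : 4 ≤ 2*n := by omega
  have hw' : (w:ℕ) = m + 1 := by rw [hw, Nat.mod_eq_of_lt (by omega)]
  -- adjacencies
  have a_hu : (cogwheel n).Adj none (some u) := cog_adj_hub u (by omega)
  have a_uw : (cogwheel n).Adj (some u) (some w) := cog_adj_cycle u w
    (by rw [hw, hu])
  have a_wv : (cogwheel n).Adj (some w) (some v) := cog_adj_cycle w v
    (by rw [hv, hw']; )
  have a_hv : (cogwheel n).Adj none (some v) := cog_adj_hub v (by
    rcases Nat.lt_or_ge (m+2) (2*n) with h | h
    · rw [hv, Nat.mod_eq_of_lt h]; omega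
    · have : m + 2 = 2*n := by omega
      rw [hv, this, Nat.mod_self])
  -- non-adjacencies
  have na_hw : ¬ (cogwheel n).Adj none (some w) := by
    rw [cog_adj_iff]; rintro ⟨-, h | h⟩
    · exact h
    · simp only [hw'] at h; omega
  have na_uv : ¬ (cogwheel n).Adj (some u) (some v) := by
    rw [cog_adj_iff]; rintro ⟨-, h | h⟩ <;> simp only [hu, hv] at h
    · rcases Nat.lt_or_ge (m+2) (2*n) with hc | hc
      · rw [Nat.mod_eq_of_lt hc, Nat.mod_eq_of_lt (by omega)] at h; omega
      · have e2 : m + 2 = 2*n := by omega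
        rw [e2, Nat.mod_self, Nat.mod_eq_of_lt (by omega)] at h; omega
    · rcases Nat.lt_or_ge (m+2) (2*n) with hc | hc
      · rw [Nat.mod_eq_of_lt hc] at h
        rcases Nat.lt_or_ge (m+3) (2*n) with hc3 | hc3
        · rw [Nat.mod_eq_of_lt hc3] at h; omega
        · have e3 : m + 3 = 2*n := by omega
          rw [e3, Nat.mod_self] at h; omega
      · have e2 : m + 2 = 2*n := by omega
        rw [e2, Nat.mod_self] at h
        rw [Nat.mod_eq_of_lt (by omega)] at h; omega
  have hu_ne_v : u ≠ v := by
    intro hh; rw [hh] at hu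
    rcases Nat.lt_or_ge (m+2) (2*n) with hc | hc
    · rw [Nat.mod_eq_of_lt hc] at hv; omega
    · have e2 : m + 2 = 2*n := by omega
      rw [e2, Nat.mod_self] at hv; omega
  -- walks of length 2
  let W1 : (cogwheel n).Walk none (some w) := .cons a_hu (.cons a_uw .nil)
  let W2 : (cogwheel n).Walk (some u) (some v) := .cons a_uw (.cons a_wv .nil)
  have d_hw_le : (cogwheel n).dist none (some w) ≤ 2 := by
    simpa [W1] using SimpleGraph.dist_le W1
  have d_uv_le : (cogwheel n).dist (some u) (some v) ≤ 2 := by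
    simpa [W2] using SimpleGraph.dist_le W2
  have d_hw_pos : 0 < (cogwheel n).dist none (some w) :=
    SimpleGraph.Reachable.pos_dist_of_ne ⟨W1⟩ (by simp)
  have d_uv_pos : 0 < (cogwheel n).dist (some u) (some v) :=
    SimpleGraph.Reachable.pos_dist_of_ne ⟨W2⟩ (by simpa using hu_ne_v)
  have d_hw_ne1 : (cogwheel n).dist none (some w) ≠ 1 :=
    fun h => na_hw (SimpleGraph.dist_eq_one_iff_adj.mp h)
  have d_uv_ne1 : (cogwheel n).dist (some u) (some v) ≠ 1 :=
    fun h => na_uv (SimpleGraph.dist_eq_one_iff_adj.mp h)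
  exact ⟨SimpleGraph.dist_eq_one_iff_adj.mpr a_hu, SimpleGraph.dist_eq_one_iff_adj.mpr a_hv,
    SimpleGraph.dist_eq_one_iff_adj.mpr a_uw, SimpleGraph.dist_eq_one_iff_adj.mpr a_wv,
    by omega, by omega⟩

private theorem cog_aux (n : ℕ) (hn2 : 2 ≤ n) (hodd : n % 2 = 1)
    (A B : Type) (T₁ : SimpleGraph A) (T₂ : SimpleGraph B) (hT₁ : T₁.IsTree) (hT₂ : T₂.IsTree)
    (f : Option (Fin (2 * n)) → A × B)
    (hf : ∀ x y, (T₁ □ T₂).dist (f x) (f y) = (cogwheel n).dist x y) : False := by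
  have hd : ∀ x y, (cogwheel n).dist x y =
      T₁.dist (f x).1 (f y).1 + T₂.dist (f x).2 (f y).2 := by
    intro x y
    rw [← hf x y, myBoxProd_dist hT₁.isConnected hT₂.isConnected]
  have hNpos : 0 < 2*n := by omega
  let spoke : ℕ → Fin (2*n) := fun i => ⟨(2*i) % (2*n), Nat.mod_lt _ hNpos⟩
  let C : ℕ → Bool := fun i => decide (T₂.dist (f none).2 (f (some (spoke i))).2 = 0)
  have alt : ∀ i, C (i+1) = ! C i := by
    intro i
    set m : ℕ := (2*i) % (2*n) with hm
    have hm2 : m % 2 = 0 := by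
      rw [hm, Nat.mul_mod_mul_left]; omega
    have hmlt : m < 2*n := Nat.mod_lt _ hNpos
    have hmN : m + 2 ≤ 2*n := by omega
    let w : Fin (2*n) := ⟨(m+1) % (2*n), Nat.mod_lt _ hNpos⟩
    have hv : ((spoke (i+1) : Fin (2*n)) : ℕ) = (m+2) % (2*n) := by
      show (2*(i+1)) % (2*n) = (m+2) % (2*n)
      rw [hm, Nat.mod_add_mod]; ring_nf
    obtain ⟨d1, d2, d3, d4, d5, d6⟩ := cog_square hn2 m hm2 hmN (spoke i) w (spoke (i+1))
      rfl rfl hv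
    have key : C i ≠ C (i+1) := by
      intro hCeq
      rcases Bool.eq_false_or_eq_true (C i) with hb | hb
      · -- both true : spokes collapse in the second tree
        rw [hb] at hCeq
        have eu : T₂.dist (f none).2 (f (some (spoke i))).2 = 0 :=
          of_decide_eq_true hb
        have ev : T₂.dist (f none).2 (f (some (spoke (i+1)))).2 = 0 :=
          of_decide_eq_true hCeq.symm
        exact core_square hT₁ hT₂.isConnected (fun x => (f x).1) (fun x => (f x).2)
          (cogwheel n).dist hd
          none (some (spoke i)) (some w) (some (spoke (i+1))) d1 d2 d3 d4 d5 d6 eu ev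
      · -- both false : spokes live in the first tree
        rw [hb] at hCeq
        have eu : T₂.dist (f none).2 (f (some (spoke i))).2 ≠ 0 :=
          of_decide_eq_false hb
        have ev : T₂.dist (f none).2 (f (some (spoke (i+1)))).2 ≠ 0 :=
          of_decide_eq_false hCeq.symm
        have hu1 := hd none (some (spoke i))
        have hv1 := hd none (some (spoke (i+1)))
        rw [d1] at hu1; rw [d2] at hv1
        refine core_square hT₂ hT₁.isConnected (fun x => (f x).2) (fun x => (f x).1)
          (cogwheel n).dist (fun x y => by
            show (cogwheel n).dist x y = T₂.dist (f x).2 (f y).2 + T₁.dist (f x).1 (f y).1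
            rw [hd x y]; omega)
          none (some (spoke i)) (some w) (some (spoke (i+1))) d1 d2 d3 d4 d5 d6 ?_ ?_
        · show T₁.dist (f none).1 (f (some (spoke i))).1 = 0
          omega
        · show T₁.dist (f none).1 (f (some (spoke (i+1)))).1 = 0
          omega
    rcases Bool.eq_false_or_eq_true (C i) with hb | hb <;>
      rcases Bool.eq_false_or_eq_true (C (i+1)) with hb' | hb' <;>
      simp [hb, hb'] at key ⊢
  have per : C n = C 0 := by
    have : spoke n = spoke 0 := by
      apply Fin.ext
      show (2*n) % (2*n) = (2*0) % (2*n)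
      simp
    simp only [C, this]
  have patt : ∀ j, C (2*j) = C 0 := by
    intro j
    induction j with
    | zero => rfl
    | succ j ih =>
      have e1 : 2*(j+1) = (2*j+1)+1 := by ring
      rw [e1, alt, alt, Bool.not_not, ih]
  obtain ⟨k', hk'⟩ : ∃ k', n = 2*k'+1 := ⟨n/2, by omega⟩
  have hodd2 : C n = ! C 0 := by rw [hk', alt, patt]
  rw [per] at hodd2
  exact absurd hodd2 (by cases hc : C 0 <;> simp [hc])

/-- For every `k ≥ 2`, the odd cogwheel `κ(C_{2k+1})` admits no isometric
embedding into the Cartesian product of any two trees. -/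
theorem oddCogwheel_not_embeds_in_two_trees (k : ℕ) (hk : 2 ≤ k) :
    ¬ EmbedsInTwoTrees (cogwheel (2 * k + 1)) := by
  rintro ⟨A, B, T₁, T₂, hT₁, hT₂, f, hf⟩
  exact cog_aux (2*k+1) (by omega) (by omega) A B T₁ T₂ hT₁ hT₂ f hf
end

section
/- In a median graph G, two convex splits {A1,B1} and {A2,B2} are incompatible if and only if there exists a 4-cycle (x1,x2,x3,x4,x1) of G such that x1 ∈ A1 ∩ A2, x2 ∈ B1 ∩ A2, x3 ∈ B1 ∩ B2, and x4 ∈ A1 ∩ B2. -/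
open SimpleGraph

/-- `G` is a median graph: it is connected and every triple of vertices has a
unique median. -/
def IsMedianGraph {V : Type} (G : SimpleGraph V) : Prop :=
  G.Connected ∧ ∀ u v w : V,
    ∃! m : V, m ∈ gInterval G u v ∧ m ∈ gInterval G v w ∧ m ∈ gInterval G u w

/-- `(A, B)` is a convex split of `G`: a partition of the vertex set into two
nonempty convex sets. -/
def IsConvexSplitPair {V : Type} (G : SimpleGraph V) (A B : Set V) : Prop :=
  A.Nonempty ∧ B.Nonempty ∧ IsConvexSet G A ∧ IsConvexSet G B ∧
    A ∪ B = Set.univ ∧ Disjoint A B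

section Aux

variable {V : Type} {G : SimpleGraph V}

lemma mem_gInt {u v z : V} :
    z ∈ gInterval G u v ↔ G.dist u z + G.dist z v = G.dist u v := Iff.rfl

lemma gInt_comm {u v z : V} :
    z ∈ gInterval G u v ↔ z ∈ gInterval G v u := by
  have h1 : G.dist u z = G.dist z u := SimpleGraph.dist_comm
  have h2 : G.dist z v = G.dist v z := SimpleGraph.dist_comm
  have h3 : G.dist u v = G.dist v u := SimpleGraph.dist_comm
  simp only [mem_gInt]
  omega

lemma left_mem_gInt {u v : V} : u ∈ gInterval G u v := by
  simp [mem_gInt]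

lemma right_mem_gInt {u v : V} : v ∈ gInterval G u v := by
  simp [mem_gInt]

/-- Interval transitivity: if `z ∈ I(a,b)` and `x ∈ I(z,b)` then `x ∈ I(a,b)`. -/
lemma gInt_trans (hc : G.Connected) {a b z x : V}
    (hz : z ∈ gInterval G a b) (hx : x ∈ gInterval G z b) :
    x ∈ gInterval G a b := by
  rw [mem_gInt] at *
  have t1 : G.dist a x ≤ G.dist a z + G.dist z x := hc.dist_triangle
  have t2 : G.dist a b ≤ G.dist a x + G.dist x b := hc.dist_triangle
  omega

/-- Interval transitivity on the other side: if `v ∈ I(u,w)` and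
`x ∈ I(u,v)` then `x ∈ I(u,w)`. -/
lemma gInt_trans' (hc : G.Connected) {u v w x : V}
    (hv : v ∈ gInterval G u w) (hx : x ∈ gInterval G u v) :
    x ∈ gInterval G u w := by
  rw [gInt_comm] at hv hx ⊢
  exact gInt_trans hc hv hx

/-- Crossing lemma: given a partition `A ∪ B = univ`, `Disjoint A B`, with
`a ∈ A`, `b ∈ B`, there is an edge crossing the partition inside `I(a,b)`. -/
lemma crossing (hc : G.Connected) {A B : Set V}
    (hU : A ∪ B = Set.univ) (hD : Disjoint A B) :
    ∀ n : ℕ, ∀ a ∈ A, ∀ b ∈ B, G.dist a b = n →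
      ∃ p q : V, G.Adj p q ∧ p ∈ A ∧ q ∈ B ∧
        p ∈ gInterval G a b ∧ q ∈ gInterval G a b := by
  intro n
  induction n using Nat.strong_induction_on with
  | _ n ih =>
    intro a ha b hb hab
    have hne : a ≠ b := fun h => (Set.disjoint_left.mp hD ha) (h ▸ hb)
    have hpos : G.dist a b ≠ 0 := fun h => hne (hc.dist_eq_zero_iff.mp h)
    obtain ⟨w, hw⟩ := hc.exists_walk_length_eq_dist a b
    cases w with
    | nil => exact absurd rfl hne
    | @cons _ z _ h q =>
      simp only [SimpleGraph.Walk.length_cons] at hw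
      have hdz : G.dist z b ≤ q.length := dist_le q
      have haz : G.dist a z = 1 := dist_eq_one_iff_adj.mpr h
      have htri : G.dist a b ≤ G.dist a z + G.dist z b := hc.dist_triangle
      have hzb : G.dist z b = G.dist a b - 1 := by omega
      have hzI : z ∈ gInterval G a b := by rw [mem_gInt]; omega
      by_cases hzB : z ∈ B
      · exact ⟨a, z, h, ha, hzB, left_mem_gInt, hzI⟩
      · have hzA : z ∈ A := by
          have : z ∈ A ∪ B := hU ▸ Set.mem_univ z
          rcases this with h' | h'
          · exact h'
          · exact absurd h' hzB
        obtain ⟨p, qq, hadj, hpA, hqB, hpI, hqI⟩ :=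
          ih (G.dist z b) (by omega) z hzA b hb rfl
        exact ⟨p, qq, hadj, hpA, hqB, gInt_trans hc hzI hpI, gInt_trans hc hzI hqI⟩

/-- Median graphs have no triangles. -/
lemma no_triangle (hG : IsMedianGraph G) {a b c : V}
    (hab : G.Adj a b) (hbc : G.Adj b c) (hac : G.Adj a c) : False := by
  obtain ⟨hc, hmed⟩ := hG
  obtain ⟨m, ⟨h1, h2, h3⟩, -⟩ := hmed a b c
  rw [mem_gInt] at h1 h2 h3
  have d1 : G.dist a b = 1 := dist_eq_one_iff_adj.mpr hab
  have d2 : G.dist b c = 1 := dist_eq_one_iff_adj.mpr hbc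
  have d3 : G.dist a c = 1 := dist_eq_one_iff_adj.mpr hac
  -- from h1 : dist a m + dist m b = 1, m = a or m = b
  have : G.dist a m = 0 ∨ G.dist m b = 0 := by omega
  rcases this with h | h
  · have : m = a := (hc.dist_eq_zero_iff.mp h).symm
    subst this
    rw [SimpleGraph.dist_self] at h1 h3
    rw [SimpleGraph.dist_comm] at h2
    omega
  · have : m = b := hc.dist_eq_zero_iff.mp h
    subst this
    rw [SimpleGraph.dist_self] at h2
    rw [SimpleGraph.dist_comm] at h1
    omega

end Aux

/-- In a median graph, two convex splits `{A1, B1}` and `{A2, B2}` are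
incompatible iff there is a 4-cycle `(x1, x2, x3, x4, x1)` with
`x1 ∈ A1 ∩ A2`, `x2 ∈ B1 ∩ A2`, `x3 ∈ B1 ∩ B2` and `x4 ∈ A1 ∩ B2`. -/
theorem incompatible_iff_four_cycle {V : Type} (G : SimpleGraph V)
    (hG : IsMedianGraph G) (A1 B1 A2 B2 : Set V)
    (h1 : IsConvexSplitPair G A1 B1) (h2 : IsConvexSplitPair G A2 B2) :
    ((A1 ∩ A2).Nonempty ∧ (A1 ∩ B2).Nonempty ∧ (B1 ∩ A2).Nonempty ∧
        (B1 ∩ B2).Nonempty) ↔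
      ∃ x1 x2 x3 x4 : V, G.Adj x1 x2 ∧ G.Adj x2 x3 ∧ G.Adj x3 x4 ∧
        G.Adj x4 x1 ∧ x1 ∈ A1 ∩ A2 ∧ x2 ∈ B1 ∩ A2 ∧ x3 ∈ B1 ∩ B2 ∧
        x4 ∈ A1 ∩ B2 := by
  obtain ⟨hc, hmed⟩ := hG
  obtain ⟨-, -, hA1c, hB1c, hU1, hD1⟩ := h1
  obtain ⟨-, -, hA2c, hB2c, hU2, hD2⟩ := h2
  constructor
  · rintro ⟨⟨u0, hu0⟩, ⟨t0, ht0⟩, ⟨v0, hv0⟩, ⟨w0, hw0⟩⟩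
    -- the set of distances between the two "diagonal" quadrants
    set S : Set ℕ := {n | ∃ u ∈ A1 ∩ A2, ∃ w ∈ B1 ∩ B2, G.dist u w = n} with hS
    have hSne : S.Nonempty := ⟨G.dist u0 w0, u0, hu0, w0, hw0, rfl⟩
    obtain ⟨u, ⟨huA1, huA2⟩, w, ⟨hwB1, hwB2⟩, hD⟩ := Nat.sInf_mem hSne
    set D := sInf S with hDdef
    have hmin : ∀ u' ∈ A1 ∩ A2, ∀ w' ∈ B1 ∩ B2, D ≤ G.dist u' w' := by
      intro u' hu' w' hw'
      exact Nat.sInf_le ⟨u', hu', w', hw', rfl⟩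
    -- median of (u, v0, w) lands in B1 ∩ A2 ∩ I(u,w)
    obtain ⟨m1, ⟨hm1a, hm1b, hm1c⟩, -⟩ := hmed u v0 w
    have hm1A2 : m1 ∈ A2 := hA2c u huA2 v0 hv0.2 hm1a
    have hm1B1 : m1 ∈ B1 := hB1c v0 hv0.1 w hwB1 hm1b
    -- crossing edge of split (A1,B1) on I(u, m1)
    obtain ⟨p1, p, hadj_p, hp1A1, hpB1, hp1I, hpI⟩ :=
      crossing hc hU1 hD1 (G.dist u m1) u huA1 m1 hm1B1 rfl
    have hp1A2 : p1 ∈ A2 := hA2c u huA2 m1 hm1A2 hp1I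
    have hpA2 : p ∈ A2 := hA2c u huA2 m1 hm1A2 hpI
    have hp1Iw : p1 ∈ gInterval G u w := gInt_trans' hc hm1c hp1I
    have hpIw : p ∈ gInterval G u w := gInt_trans' hc hm1c hpI
    have hp1u : p1 = u := by
      have h' : D ≤ G.dist p1 w := hmin p1 ⟨hp1A1, hp1A2⟩ w ⟨hwB1, hwB2⟩
      have h'' := mem_gInt.mp hp1Iw
      have : G.dist u p1 = 0 := by omega
      exact (hc.dist_eq_zero_iff.mp this).symm
    rw [hp1u] at hadj_p
    -- median of (u, t0, w) lands in A1 ∩ B2 ∩ I(u,w)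
    obtain ⟨m2, ⟨hm2a, hm2b, hm2c⟩, -⟩ := hmed u t0 w
    have hm2A1 : m2 ∈ A1 := hA1c u huA1 t0 ht0.1 hm2a
    have hm2B2 : m2 ∈ B2 := hB2c t0 ht0.2 w hwB2 hm2b
    obtain ⟨q1, q, hadj_q, hq1A2, hqB2, hq1I, hqI⟩ :=
      crossing hc hU2 hD2 (G.dist u m2) u huA2 m2 hm2B2 rfl
    have hq1A1 : q1 ∈ A1 := hA1c u huA1 m2 hm2A1 hq1I
    have hqA1 : q ∈ A1 := hA1c u huA1 m2 hm2A1 hqI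
    have hq1Iw : q1 ∈ gInterval G u w := gInt_trans' hc hm2c hq1I
    have hqIw : q ∈ gInterval G u w := gInt_trans' hc hm2c hqI
    have hq1u : q1 = u := by
      have h' : D ≤ G.dist q1 w := hmin q1 ⟨hq1A1, hq1A2⟩ w ⟨hwB1, hwB2⟩
      have h'' := mem_gInt.mp hq1Iw
      have : G.dist u q1 = 0 := by omega
      exact (hc.dist_eq_zero_iff.mp this).symm
    rw [hq1u] at hadj_q
    -- basic distances
    have hup : G.dist u p = 1 := dist_eq_one_iff_adj.mpr hadj_p
    have huq : G.dist u q = 1 := dist_eq_one_iff_adj.mpr hadj_q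
    have hpw : G.dist p w = G.dist u w - 1 := by
      have := mem_gInt.mp hpIw; omega
    have hqw : G.dist q w = G.dist u w - 1 := by
      have := mem_gInt.mp hqIw; omega
    have huw : G.dist u w = D := hD
    have hD1' : 1 ≤ D := by
      have : u ≠ w := fun h => (Set.disjoint_left.mp hD1 huA1) (h ▸ hwB1)
      have := hc.pos_dist_of_ne this
      omega
    have hD2' : 2 ≤ D := by
      by_contra h
      have hD1'' : D = 1 := by omega
      have : G.dist p w = 0 := by omega
      have : p = w := hc.dist_eq_zero_iff.mp this
      exact (Set.disjoint_left.mp hD2 hpA2) (this ▸ hwB2)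
    -- p ≠ q, p not adjacent to q, so dist p q = 2
    have hpq_ne : p ≠ q := fun h => (Set.disjoint_left.mp hD1 hqA1) (h ▸ hpB1)
    have hpq_nadj : ¬ G.Adj p q := fun h =>
      no_triangle ⟨hc, hmed⟩ hadj_p h hadj_q
    have hpq : G.dist p q = 2 := by
      have hle : G.dist p q ≤ G.dist p u + G.dist u q := hc.dist_triangle
      have hpu : G.dist p u = 1 := (SimpleGraph.dist_comm).trans hup
      have hne0 : G.dist p q ≠ 0 := fun h => hpq_ne (hc.dist_eq_zero_iff.mp h)
      have hne1 : G.dist p q ≠ 1 := fun h => hpq_nadj (dist_eq_one_iff_adj.mp h)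
      omega
    -- median of (p, q, w) is adjacent to p and q, lies in B1 ∩ B2, equals w
    obtain ⟨m, ⟨hma, hmb, hmc⟩, -⟩ := hmed p q w
    have hmB2 : m ∈ B2 := hB2c q hqB2 w hwB2 hmb
    have hmB1 : m ∈ B1 := hB1c p hpB1 w hwB1 hmc
    have h5 := mem_gInt.mp hma
    have h6 := mem_gInt.mp hmb
    have h7 := mem_gInt.mp hmc
    rw [hpq] at h5
    have hmp_ne : G.dist p m ≠ 0 := by
      intro h
      have hpm : p = m := hc.dist_eq_zero_iff.mp h
      rw [← hpm] at h6
      have hcm : G.dist q p = G.dist p q := SimpleGraph.dist_comm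
      omega
    have hmq_ne : G.dist m q ≠ 0 := by
      intro h
      have hmq : m = q := hc.dist_eq_zero_iff.mp h
      rw [hmq] at h7
      omega
    have hpm1 : G.dist p m = 1 := by omega
    have hmq1 : G.dist m q = 1 := by omega
    have hmw0 : G.dist m w = 0 := by
      have hDum : D ≤ G.dist u m := hmin u ⟨huA1, huA2⟩ m ⟨hmB1, hmB2⟩
      have hle : G.dist u m ≤ G.dist u p + G.dist p m := hc.dist_triangle
      omega
    have hmw : m = w := hc.dist_eq_zero_iff.mp hmw0
    rw [hmw] at hpm1 hmq1
    have hadj_pw : G.Adj p w := dist_eq_one_iff_adj.mp hpm1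
    have hadj_wq : G.Adj w q := dist_eq_one_iff_adj.mp hmq1
    exact ⟨u, p, w, q, hadj_p, hadj_pw, hadj_wq, hadj_q.symm,
      ⟨huA1, huA2⟩, ⟨hpB1, hpA2⟩, ⟨hwB1, hwB2⟩, ⟨hqA1, hqB2⟩⟩
  · rintro ⟨x1, x2, x3, x4, -, -, -, -, h1, h2, h3, h4⟩
    exact ⟨⟨x1, h1⟩, ⟨x4, h4⟩, ⟨x2, h2⟩, ⟨x3, h3⟩⟩
end

section
/- Let (X,d) be a complete metric space that is Menger-convex and in which any two distinct points are joined by a unique arc, in the sense that any two injective continuous paths in X with the same pair of endpoints have the same image. Then for any two distinct points x,y ∈ X, the image of the arc joining x and y equals the interval I(x,y) = {z ∈ X : d(x,z) + d(z,y) = d(x,y)}. -/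
section Aux
variable {X : Type} [MetricSpace X]

private lemma btrans {a p q r : X} (h1 : dist a p + dist p q = dist a q)
    (h2 : dist a q + dist q r = dist a r) : dist a p + dist p r = dist a r := by
  have t1 := dist_triangle a p r
  have t2 := dist_triangle p q r
  linarith

private lemma bsplit {a u v w : X} (h1 : dist a u + dist u v = dist a v)
    (h2 : dist u w + dist w v = dist u v) :
    dist a u + dist u w = dist a w ∧ dist a w + dist w v = dist a v := by
  have t1 := dist_triangle a w v
  have t2 := dist_triangle a u w
  constructor <;> linarith

private lemma alignment_closure {a : X} {U : Set X}
    (h : ∀ p ∈ U, ∀ q ∈ U, dist p q = |dist a q - dist a p|) :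
    ∀ p ∈ closure U, ∀ q ∈ closure U, dist p q = |dist a q - dist a p| := by
  have step1 : ∀ p ∈ U, ∀ q ∈ closure U, dist p q = |dist a q - dist a p| := by
    intro p hp q hq
    have hcl : closure U ⊆ {q' | dist p q' = |dist a q' - dist a p|} :=
      closure_minimal (fun q' hq' => h p hp q' hq')
        (isClosed_eq (by fun_prop) (by fun_prop))
    exact hcl hq
  intro p hp q hq
  have hcl : closure U ⊆ {p' | dist p' q = |dist a q - dist a p'|} :=
    closure_minimal (fun p' hp' => step1 p' hp' q hq)
      (isClosed_eq (by fun_prop) (by fun_prop))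
  exact hcl hp

private theorem exists_geodesic_path [CompleteSpace X]
    (hM : ∀ x y : X, x ≠ y → ∃ z : X, z ≠ x ∧ z ≠ y ∧ dist x z + dist z y = dist x y)
    (a b : X) (hab : a ≠ b) :
    ∃ δ : Path a b, Function.Injective ⇑δ ∧
      ∀ p ∈ Set.range ⇑δ, dist a p + dist p b = dist a b := by
  set D := dist a b with hDdef
  have hD : 0 < D := dist_pos.2 hab
  -- the collection of closed, aligned subsets of the interval I(a,b) containing a,b
  set S : Set (Set X) := {A | IsClosed A ∧ a ∈ A ∧ b ∈ A ∧
      (∀ p ∈ A, dist a p + dist p b = D) ∧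
      (∀ p ∈ A, ∀ q ∈ A, dist p q = |dist a q - dist a p|)} with hSdef
  have hbase : (insert a {b} : Set X) ∈ S := by
    refine ⟨(Set.toFinite _).isClosed, by simp, by simp, ?_, ?_⟩
    · rintro p (rfl | rfl)
      · simp [hDdef]
      · simp [hDdef]
    · rintro p (rfl | rfl) q (rfl | rfl) <;>
        simp [dist_comm, abs_of_nonneg dist_nonneg, abs_sub_comm]
  obtain ⟨M, hMS, hMmax⟩ : ∃ M, Maximal (· ∈ S) M := by
    apply zorn_subset
    intro c hcS hchain
    set U : Set X := ⋃₀ c ∪ insert a {b} with hUdef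
    have hmem : ∀ p ∈ U, ∃ A ∈ S, p ∈ A ∧ ∀ B ∈ c, p ∈ B ∨ B ⊆ A := by
      intro p hp
      rcases hp with ⟨A, hAc, hpA⟩ | hp
      · refine ⟨A, hcS hAc, hpA, fun B hB => ?_⟩
        rcases hchain.total hB hAc with h | h
        · exact Or.inr h
        · exact Or.inl (h hpA)
      · refine ⟨insert a {b}, hbase, hp, fun B hB => Or.inl ?_⟩
        rcases hp with rfl | hp
        · exact (hcS hB).2.1
        · rcases hp with rfl
          exact (hcS hB).2.2.1
    have hUal : ∀ p ∈ U, ∀ q ∈ U, dist p q = |dist a q - dist a p| := by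
      intro p hp q hq
      obtain ⟨A, hAS, hpA, hAc⟩ := hmem p hp
      rcases hq with ⟨B, hBc, hqB⟩ | hq
      · rcases hAc B hBc with hpB | hBA
        · exact (hcS hBc).2.2.2.2 p hpB q hqB
        · exact hAS.2.2.2.2 p hpA q (hBA hqB)
      · rcases hq with rfl | hq
        · exact hAS.2.2.2.2 p hpA q hAS.2.1
        · rcases hq with rfl
          exact hAS.2.2.2.2 p hpA q hAS.2.2.1
    refine ⟨closure U, ⟨isClosed_closure, ?_, ?_, ?_, alignment_closure hUal⟩, ?_⟩
    · exact subset_closure (Or.inr (by simp))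
    · exact subset_closure (Or.inr (by simp))
    · have hsub : U ⊆ {p | dist a p + dist p b = D} := by
        intro p hp
        obtain ⟨A, hAS, hpA, -⟩ := hmem p hp
        exact hAS.2.2.2.1 p hpA
      intro p hp
      exact closure_minimal hsub (isClosed_eq (by fun_prop) (by fun_prop)) hp
    · intro A hAc
      exact (Set.subset_sUnion_of_mem hAc).trans
        (Set.subset_union_left.trans subset_closure)
  obtain ⟨hMcl, haM, hbM, hMI, hMal⟩ := hMS
  -- key claim: every value in [0, D] is attained by dist a · on M
  have hkey : ∀ t ∈ Set.Icc (0:ℝ) D, ∃ p ∈ M, dist a p = t := by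
    by_contra hcon
    push_neg at hcon
    obtain ⟨t, htIcc, hnot⟩ := hcon
    set T : Set ℝ := (dist a) '' M with hTdef
    have h0T : (0:ℝ) ∈ T := ⟨a, haM, by simp⟩
    have hDT : D ∈ T := ⟨b, hbM, rfl⟩
    have hTIcc : T ⊆ Set.Icc 0 D := by
      rintro s ⟨p, hpM, rfl⟩
      have := hMI p hpM
      constructor
      · exact dist_nonneg
      · have := dist_nonneg (x := p) (y := b); linarith
    have htT : t ∉ T := by
      rintro ⟨p, hpM, rfl⟩
      exact hnot p hpM rfl
    -- T is closed
    have hTcl : IsClosed T := by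
      rw [← isSeqClosed_iff_isClosed]
      intro u s hu hus
      have hsel : ∀ n, ∃ p ∈ M, dist a p = u n := by
        intro n; exact (hu n)
      choose p hpM hpd using hsel
      have hcauchy : CauchySeq p := by
        rw [Metric.cauchySeq_iff]
        have := hus.cauchySeq
        rw [Metric.cauchySeq_iff] at this
        intro ε hε
        obtain ⟨N, hN⟩ := this ε hε
        refine ⟨N, fun m hm n hn => ?_⟩
        have := hN m hm n hn
        rw [Real.dist_eq] at this
        rw [hMal (p m) (hpM m) (p n) (hpM n)]
        rw [hpd m, hpd n]
        rwa [abs_sub_comm]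
      obtain ⟨q, hq⟩ := cauchySeq_tendsto_of_complete hcauchy
      have hqM : q ∈ M := hMcl.mem_of_tendsto hq (Filter.Eventually.of_forall hpM)
      have h1 : Filter.Tendsto (fun n => dist a (p n)) Filter.atTop (nhds (dist a q)) :=
        (continuous_const.dist continuous_id).continuousAt.tendsto.comp hq
      have h2 : Filter.Tendsto (fun n => dist a (p n)) Filter.atTop (nhds s) := by
        simpa [hpd] using hus
      exact ⟨q, hqM, tendsto_nhds_unique h1 h2⟩
    have ht0 : 0 < t := lt_of_le_of_ne htIcc.1 (fun h => htT (h ▸ h0T))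
    have htD : t < D := lt_of_le_of_ne htIcc.2 (fun h => htT (h ▸ hDT))
    -- sup below and inf above
    set T₁ := T ∩ Set.Icc 0 t with hT1def
    set T₂ := T ∩ Set.Icc t D with hT2def
    have hT1ne : T₁.Nonempty := ⟨0, h0T, le_refl 0, ht0.le⟩
    have hT2ne : T₂.Nonempty := ⟨D, hDT, htD.le, le_refl D⟩
    have hT1bdd : BddAbove T₁ := ⟨t, fun s hs => hs.2.2⟩
    have hT2bdd : BddBelow T₂ := ⟨t, fun s hs => hs.2.1⟩
    set t₁ := sSup T₁ with ht1def
    set t₂ := sInf T₂ with ht2def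
    have ht1mem : t₁ ∈ T₁ := (hTcl.inter isClosed_Icc).csSup_mem hT1ne hT1bdd
    have ht2mem : t₂ ∈ T₂ := (hTcl.inter isClosed_Icc).csInf_mem hT2ne hT2bdd
    have ht1lt : t₁ < t := lt_of_le_of_ne ht1mem.2.2 (fun h => htT (h ▸ ht1mem.1))
    have ht2gt : t < t₂ := lt_of_le_of_ne ht2mem.2.1 (fun h => htT (by rw [h]; exact ht2mem.1))
    obtain ⟨p₁, hp1M, hp1d⟩ := ht1mem.1
    obtain ⟨p₂, hp2M, hp2d⟩ := ht2mem.1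
    have hp12 : p₁ ≠ p₂ := by
      intro h; rw [h, hp2d] at hp1d; linarith
    obtain ⟨w, hwp1, hwp2, hwB⟩ := hM p₁ p₂ hp12
    -- `w` lies strictly between `p₁` and `p₂`, hence its "coordinate" is in the gap
    have hB12 : dist a p₁ + dist p₁ p₂ = dist a p₂ := by
      have := hMal p₁ hp1M p₂ hp2M
      rw [hp1d, hp2d] at this ⊢
      rw [this, abs_of_nonneg (by linarith)]
      ring
    obtain ⟨hBaw, hBwp2⟩ := bsplit hB12 hwB
    have hw1pos : 0 < dist p₁ w := dist_pos.2 (Ne.symm hwp1)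
    have hw2pos : 0 < dist w p₂ := dist_pos.2 hwp2
    have htw1 : t₁ < dist a w := by rw [← hBaw, hp1d]; linarith
    have htw2 : dist a w < t₂ := by
      rw [← hp2d, ← hBwp2]; linarith
    have hwM : w ∉ M := by
      intro hwM
      have hwT : dist a w ∈ T := ⟨w, hwM, rfl⟩
      rcases le_total (dist a w) t with h | h
      · have : dist a w ∈ T₁ := ⟨hwT, dist_nonneg, h⟩
        have := le_csSup hT1bdd this
        linarith
      · have : dist a w ∈ T₂ := ⟨hwT, h, (hTIcc hwT).2⟩
        have := csInf_le hT2bdd this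
        linarith
    -- extend M by w, contradicting maximality
    have hwI : dist a w + dist w b = D := by
      have := hMI p₂ hp2M
      exact btrans hBwp2 this
    have halw : ∀ q ∈ M, dist q w = |dist a w - dist a q| := by
      intro q hqM
      have hqT : dist a q ∈ T := ⟨q, hqM, rfl⟩
      rcases le_total (dist a q) t with h | h
      · -- dist a q ≤ t₁ < dist a w ; q between a and w
        have hq1 : dist a q ≤ t₁ := le_csSup hT1bdd ⟨hqT, dist_nonneg, h⟩
        have hBqp1 : dist a q + dist q p₁ = dist a p₁ := by
          have := hMal q hqM p₁ hp1M
          rw [this, hp1d, abs_of_nonneg (by linarith)]; ring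
        have hBqw : dist a q + dist q w = dist a w := btrans hBqp1 hBaw
        rw [abs_of_nonneg (by linarith), ← hBqw]; ring
      · have hq2 : t₂ ≤ dist a q := csInf_le hT2bdd ⟨hqT, h, (hTIcc hqT).2⟩
        have hBp2q : dist a p₂ + dist p₂ q = dist a q := by
          have := hMal p₂ hp2M q hqM
          rw [this, hp2d, abs_of_nonneg (by linarith)]; ring
        have hBwq : dist a w + dist w q = dist a q := btrans hBwp2 hBp2q
        rw [abs_of_nonpos (by linarith), dist_comm q w, ← hBwq]; ring
    have hMw : insert w M ∈ S := by
      refine ⟨isClosed_singleton.union hMcl, Set.mem_insert_of_mem _ haM,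
        Set.mem_insert_of_mem _ hbM, ?_, ?_⟩
      · rintro p (rfl | hpM)
        · exact hwI
        · exact hMI p hpM
      · rintro p (rfl | hpM) q (rfl | hqM)
        · simp
        · rw [dist_comm, halw q hqM, abs_sub_comm]
        · exact halw p hpM
        · exact hMal p hpM q hqM
    have : insert w M ⊆ M := hMmax hMw (Set.subset_insert w M)
    exact hwM (this (Set.mem_insert w M))
  -- uniqueness of the point at each distance
  have huniq : ∀ p ∈ M, ∀ q ∈ M, dist a p = dist a q → p = q := by
    intro p hp q hq h
    have := hMal p hp q hq
    rw [h, sub_self, abs_zero] at this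
    exact dist_le_zero.1 this.le
  -- construct the geodesic path
  have hsel : ∀ u : unitInterval, ∃ p, p ∈ M ∧ dist a p = (u : ℝ) * D := by
    intro u
    have h1 : (0:ℝ) ≤ (u:ℝ) * D := mul_nonneg u.2.1 hD.le
    have h2 : (u:ℝ) * D ≤ D := by nlinarith [u.2.2]
    obtain ⟨p, hp, hd⟩ := hkey ((u:ℝ) * D) ⟨h1, h2⟩
    exact ⟨p, hp, hd⟩
  choose g hgM hgd using hsel
  have hgdist : ∀ u v : unitInterval, dist (g u) (g v) = |(v:ℝ) * D - (u:ℝ) * D| := by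
    intro u v
    rw [hMal (g u) (hgM u) (g v) (hgM v), hgd, hgd]
  have hcont : Continuous g := by
    apply LipschitzWith.continuous (K := Real.toNNReal D)
    apply LipschitzWith.of_dist_le_mul
    intro u v
    rw [hgdist u v]
    have h1 : (v:ℝ) * D - (u:ℝ) * D = D * ((v:ℝ) - (u:ℝ)) := by ring
    rw [h1, abs_mul, abs_of_pos hD, Real.coe_toNNReal _ hD.le]
    have h2 : dist u v = |(u:ℝ) - (v:ℝ)| := by
      rw [Subtype.dist_eq, Real.dist_eq]
    rw [h2, abs_sub_comm]
  have hg0 : g 0 = a := by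
    apply huniq (g 0) (hgM 0) a haM
    rw [hgd, dist_self]
    simp
  have hg1 : g 1 = b := by
    have hd1 : dist a (g 1) = D := by rw [hgd]; simp
    have := hMI (g 1) (hgM 1)
    rw [hd1] at this
    have : dist (g 1) b = 0 := by linarith
    exact dist_le_zero.1 this.le
  refine ⟨⟨⟨g, hcont⟩, hg0, hg1⟩, ?_, ?_⟩
  · intro u v h
    have := hgdist u v
    rw [show ((⟨⟨g, hcont⟩, hg0, hg1⟩ : Path a b) : unitInterval → X) = g from rfl] at h
    rw [h, dist_self] at this
    have hvu : (v:ℝ) * D - (u:ℝ) * D = 0 := by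
      rcases abs_eq_zero.1 this.symm with h'
      exact h'
    apply Subtype.ext
    have : ((v:ℝ) - (u:ℝ)) * D = 0 := by linarith [hvu]
    rcases mul_eq_zero.1 this with h' | h'
    · linarith [sub_eq_zero.1 h']
    · exact absurd h' hD.ne'
  · rintro p ⟨u, rfl⟩
    exact hMI _ (hgM u)


private theorem geodesic_intersect {X : Type} [MetricSpace X] {x y z : X}
    (hz : dist x z + dist z y = dist x y)
    {α : Path x z} {β : Path z y}
    (hαI : ∀ p ∈ Set.range ⇑α, dist x p + dist p z = dist x z)
    (hβI : ∀ p ∈ Set.range ⇑β, dist z p + dist p y = dist z y) :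
    ∀ p, p ∈ Set.range ⇑α → p ∈ Set.range ⇑β → p = z := by
  intro p hpα hpβ
  have h1 := hαI p hpα
  have h2 := hβI p hpβ
  have h3 := dist_triangle x p y
  have hc : dist z p = dist p z := dist_comm z p
  have : dist p z ≤ 0 := by linarith
  exact dist_le_zero.1 this

end Aux

/-- Let `(X, d)` be a complete Menger-convex metric space in which any two
distinct points are joined by a unique arc (any two injective paths with the
same endpoints have the same image, and such a path exists). Then for any two
distinct points `x, y`, the image of the arc joining them equals the metric
interval `I(x, y) = {z | d(x, z) + d(z, y) = d(x, y)}`. -/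
theorem arc_eq_interval {X : Type} [MetricSpace X] [CompleteSpace X]
    (hMenger : ∀ x y : X, x ≠ y →
      ∃ z : X, z ≠ x ∧ z ≠ y ∧ dist x z + dist z y = dist x y)
    (hexists : ∀ x y : X, x ≠ y → ∃ γ : Path x y, Function.Injective ⇑γ)
    (hunique : ∀ (x y : X) (γ₁ γ₂ : Path x y), Function.Injective ⇑γ₁ →
      Function.Injective ⇑γ₂ → Set.range ⇑γ₁ = Set.range ⇑γ₂)
    (x y : X) (hxy : x ≠ y) (γ : Path x y) (hγ : Function.Injective ⇑γ) :
    Set.range ⇑γ = {z : X | dist x z + dist z y = dist x y} := by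
  obtain ⟨δ, hδinj, hδI⟩ := exists_geodesic_path hMenger x y hxy
  have hrange : Set.range ⇑γ = Set.range ⇑δ := hunique x y γ δ hγ hδinj
  ext z
  simp only [Set.mem_setOf_eq]
  constructor
  · intro hzr
    exact hδI z (hrange ▸ hzr)
  · intro hz
    by_cases hzx : z = x
    · exact ⟨0, by rw [γ.source, hzx]⟩
    by_cases hzy : z = y
    · exact ⟨1, by rw [γ.target, hzy]⟩
    obtain ⟨α, hαinj, hαI⟩ := exists_geodesic_path hMenger x z (Ne.symm hzx)
    obtain ⟨β, hβinj, hβI⟩ := exists_geodesic_path hMenger z y hzy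
    have hint := geodesic_intersect hz hαI hβI
    have hcinj : Function.Injective ⇑(α.trans β) := by
      intro u v h
      rw [Path.trans_apply, Path.trans_apply] at h
      split_ifs at h with h₁ h₂ h₂
      · have h' : (2 * (u:ℝ) : ℝ) = 2 * (v:ℝ) := congrArg Subtype.val (hαinj h)
        exact Subtype.ext (by linarith)
      · exfalso
        have hpz : α ⟨2 * (u:ℝ), _⟩ = z := hint _ ⟨_, rfl⟩ ⟨_, h.symm⟩
        have hqz : β ⟨2 * (v:ℝ) - 1, _⟩ = z := h.symm.trans hpz
        have h2v : (⟨2 * (v:ℝ) - 1, _⟩ : unitInterval) = 0 := hβinj (by rw [hqz, β.source])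
        have h' : (2 * (v:ℝ) - 1 : ℝ) = 0 := congrArg Subtype.val h2v
        exact h₂ (by linarith)
      · exfalso
        have hpz : β ⟨2 * (u:ℝ) - 1, _⟩ = z := hint _ ⟨_, h.symm⟩ ⟨_, rfl⟩
        have h2u : (⟨2 * (u:ℝ) - 1, _⟩ : unitInterval) = 0 := hβinj (by rw [hpz, β.source])
        have h' : (2 * (u:ℝ) - 1 : ℝ) = 0 := congrArg Subtype.val h2u
        exact h₁ (by linarith)
      · have h' : (2 * (u:ℝ) - 1 : ℝ) = 2 * (v:ℝ) - 1 := congrArg Subtype.val (hβinj h)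
        exact Subtype.ext (by linarith)
    have hr : Set.range ⇑γ = Set.range ⇑(α.trans β) := hunique x y γ (α.trans β) hγ hcinj
    rw [hr, Path.trans_range]
    exact Or.inl ⟨1, α.target⟩
end
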